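/- Consider the probability space ([0,1], Borel, Lebesgue). Given any points 0 < x₁ < ... < xₙ < 1, let Fₙ = σ([0,x₁],...,[0,xₙ]). Then there exists a function f with ‖f‖_{L^∞} ≤ 1 such that E[f | Fₙ] = 0 Lebesgue-a.s. and ‖E[f | Fₙ] − f‖_{L¹} = 1. In particular, the Hausdorff distance d_λ(Fₙ, B) = sup_{‖f‖_∞ ≤ 1} ‖E[f|Fₙ] − E[f|B]‖_{L¹} is at least 1 for every n. -/

import Mathlib

open MeasureTheory Set

namespace HausdorffAux

variable (n : ℕ) (x : Fin n → ℝ)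

/-- Extended sequence of points: `y 0 = 0`, `y (i+1) = x i` for `i < n`, `y i = 1` for `i ≥ n+1`. -/
noncomputable def y (i : ℕ) : ℝ :=
  if i = 0 then 0 else if h' : i - 1 < n then x ⟨i - 1, h'⟩ else 1

lemma y_zero : y n x 0 = 0 := rfl

lemma y_succ {i : ℕ} (h : i < n) : y n x (i + 1) = x ⟨i, h⟩ := by
  simp [y, h]

lemma y_large {i : ℕ} (h : n + 1 ≤ i) : y n x i = 1 := by
  have h1 : i ≠ 0 := by omega
  have h2 : ¬ (i - 1 < n) := by omega
  simp [y, h1, h2]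

/-- Left halves of the atoms. -/
noncomputable def A : Set ℝ :=
  ⋃ i ∈ Finset.range (n + 1), Ioc (y n x i) ((y n x i + y n x (i + 1)) / 2)

open Classical in
/-- The adversarial function: `+1` on left halves, `-1` elsewhere. -/
noncomputable def f (t : ℝ) : ℝ := if t ∈ A n x then 1 else -1

variable {n x}
variable (hx : StrictMono x) (h0 : ∀ i, 0 < x i) (h1 : ∀ i, x i < 1)

include hx h0 h1 in
lemma y_step {i : ℕ} (h : i ≤ n) : y n x i < y n x (i + 1) := by
  rcases Nat.eq_zero_or_pos i with rfl | hipos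
  · rw [y_zero]
    rcases lt_or_ge 0 n with hn | hn
    · rw [y_succ n x hn]; exact h0 _
    · rw [y_large n x (by omega)]; norm_num
  · obtain ⟨j, rfl⟩ := Nat.exists_eq_add_of_le hipos
    have hj : j < n := by omega
    rw [Nat.add_comm 1 j, y_succ n x hj]
    rcases lt_or_ge (j + 1) n with hj1 | hj1
    · rw [y_succ n x hj1]
      exact hx (by simp [Fin.lt_def])
    · rw [y_large n x (by omega)]
      exact h1 _

include hx h0 h1 in
lemma y_mono : Monotone (y n x) := by
  apply monotone_nat_of_le_succ
  intro i
  rcases le_or_gt i n with h | h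
  · exact (y_step hx h0 h1 h).le
  · rw [y_large n x (by omega), y_large n x (by omega)]

lemma y_nonneg (h0 : ∀ i, 0 < x i) (i : ℕ) : 0 ≤ y n x i := by
  unfold y
  split
  · exact le_refl 0
  · split
    · exact (h0 _).le
    · norm_num

lemma y_le_one (h1 : ∀ i, x i < 1) (i : ℕ) : y n x i ≤ 1 := by
  unfold y
  split
  · norm_num
  · split
    · exact (h1 _).le
    · exact le_refl 1

lemma measurableSet_A : MeasurableSet (A n x) :=
  (Finset.range (n + 1)).measurableSet_biUnion fun _ _ => measurableSet_Ioc

lemma measurable_f : Measurable (f n x) :=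
  Measurable.ite measurableSet_A measurable_const measurable_const

lemma abs_f (t : ℝ) : |f n x t| = 1 := by
  unfold f; split <;> simp

lemma f_left {i : ℕ} (h : i ≤ n) {t : ℝ}
    (ht : t ∈ Ioc (y n x i) ((y n x i + y n x (i + 1)) / 2)) : f n x t = 1 := by
  unfold f
  rw [if_pos]
  exact Set.mem_biUnion (Finset.mem_range.mpr (by omega)) ht

include hx h0 h1 in
lemma f_right {i : ℕ} (h : i ≤ n) {t : ℝ}
    (ht : t ∈ Ioc ((y n x i + y n x (i + 1)) / 2) (y n x (i + 1))) : f n x t = -1 := by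
  unfold f
  rw [if_neg]
  intro hmem
  obtain ⟨j, hj, htj⟩ := Set.mem_iUnion₂.mp hmem
  rw [Finset.mem_range] at hj
  have hmono := y_mono hx h0 h1
  have hji : y n x j ≤ (y n x j + y n x (j + 1)) / 2 := by
    have := hmono (Nat.le_succ j); linarith
  have hij : (y n x i + y n x (i + 1)) / 2 ≤ y n x (i + 1) := by
    have := hmono (Nat.le_succ i); linarith
  rcases lt_trichotomy j i with hlt | rfl | hgt
  · -- t ≤ mid j ≤ y (j+1) ≤ y i ≤ mid i < t
    have h1' : (y n x j + y n x (j + 1)) / 2 ≤ y n x (j + 1) := by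
      have := hmono (Nat.le_succ j); linarith
    have h2' : y n x (j + 1) ≤ y n x i := hmono hlt
    have h3' : y n x i ≤ (y n x i + y n x (i + 1)) / 2 := by
      have := hmono (Nat.le_succ i); linarith
    have := htj.2
    have := ht.1
    linarith
  · exact absurd htj.2 (not_le.mpr ht.1)
  · -- y j < t ≤ y (i+1) ≤ y j
    have h2' : y n x (i + 1) ≤ y n x j := hmono hgt
    have := htj.1
    have := ht.2
    linarith

include h0 h1 in
lemma integrableOn_f (s : Set ℝ) (hs : s ⊆ Icc (0:ℝ) 1) : IntegrableOn (f n x) s volume := by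
  have hsub : IntegrableOn (f n x) (Icc (0:ℝ) 1) volume := by
    refine Integrable.mono' (integrable_const 1) (measurable_f.aestronglyMeasurable.restrict) ?_
    filter_upwards with t
    rw [Real.norm_eq_abs, abs_f]
  exact hsub.mono_set hs

include hx h0 h1 in
lemma atom_integral {i : ℕ} (h : i ≤ n) :
    ∫ t in Ioc (y n x i) (y n x (i + 1)), f n x t = 0 := by
  set a := y n x i with ha
  set b := y n x (i + 1) with hb
  set m := (a + b) / 2 with hm
  have hab : a ≤ b := (y_step hx h0 h1 h).le
  have ham : a ≤ m := by rw [hm]; linarith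
  have hmb : m ≤ b := by rw [hm]; linarith
  have h0a : 0 ≤ a := by rw [ha, ← y_zero n x]; exact y_mono hx h0 h1 (Nat.zero_le i)
  have hb1 : b ≤ 1 := by
    rw [hb, ← y_large n x (le_refl (n+1))]
    exact y_mono hx h0 h1 (by omega)
  have hsub1 : Ioc a m ⊆ Icc (0:ℝ) 1 := fun t ht => ⟨le_trans h0a ht.1.le, le_trans ht.2 (le_trans hmb hb1)⟩
  have hsub2 : Ioc m b ⊆ Icc (0:ℝ) 1 := fun t ht =>
    ⟨le_trans (le_trans h0a ham) ht.1.le, le_trans ht.2 hb1⟩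
  have hdisj : Disjoint (Ioc a m) (Ioc m b) := by
    rw [Set.disjoint_left]
    rintro t ⟨_, h2⟩ ⟨h3, _⟩
    exact absurd h2 (not_le.mpr h3)
  rw [← Set.Ioc_union_Ioc_eq_Ioc ham hmb,
    setIntegral_union hdisj measurableSet_Ioc (integrableOn_f h0 h1 _ hsub1)
      (integrableOn_f h0 h1 _ hsub2)]
  have e1 : ∫ t in Ioc a m, f n x t = m - a := by
    rw [setIntegral_congr_fun measurableSet_Ioc (g := fun _ => (1:ℝ))
      (fun t ht => f_left h ht)]
    rw [setIntegral_const, Real.volume_real_Ioc_of_le (by linarith), smul_eq_mul, mul_one]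
  have e2 : ∫ t in Ioc m b, f n x t = -(b - m) := by
    rw [setIntegral_congr_fun measurableSet_Ioc (g := fun _ => (-1:ℝ))
      (fun t ht => f_right hx h0 h1 h ht)]
    rw [setIntegral_const, Real.volume_real_Ioc_of_le (by linarith), smul_eq_mul]
    ring
  rw [e1, e2, hm]
  ring

include hx h0 h1 in
lemma prefix_integral {k : ℕ} (h : k ≤ n + 1) :
    ∫ t in Ioc (y n x 0) (y n x k), f n x t = 0 := by
  induction k with
  | zero => simp
  | succ k ih =>
    have hk : k ≤ n := by omega
    have h0k : y n x 0 ≤ y n x k := y_mono hx h0 h1 (Nat.zero_le k)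
    have hkk : y n x k ≤ y n x (k + 1) := y_mono hx h0 h1 (Nat.le_succ k)
    have h00 : 0 ≤ y n x 0 := le_refl 0 |>.trans (by rw [y_zero])
    have hsub1 : Ioc (y n x 0) (y n x k) ⊆ Icc (0:ℝ) 1 := by
      intro t ht
      constructor
      · rw [← y_zero n x]; exact ht.1.le
      · calc t ≤ y n x k := ht.2
          _ ≤ 1 := by rw [← y_large n x (le_refl (n+1))]; exact y_mono hx h0 h1 (by omega)
    have hsub2 : Ioc (y n x k) (y n x (k + 1)) ⊆ Icc (0:ℝ) 1 := by
      intro t ht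
      constructor
      · calc (0:ℝ) = y n x 0 := (y_zero n x).symm
          _ ≤ y n x k := h0k
          _ ≤ t := ht.1.le
      · calc t ≤ y n x (k + 1) := ht.2
          _ ≤ 1 := by rw [← y_large n x (le_refl (n+1))]; exact y_mono hx h0 h1 (by omega)
    have hdisj : Disjoint (Ioc (y n x 0) (y n x k)) (Ioc (y n x k) (y n x (k + 1))) := by
      rw [Set.disjoint_left]
      rintro t ⟨_, h2⟩ ⟨h3, _⟩
      exact absurd h2 (not_le.mpr h3)
    rw [← Set.Ioc_union_Ioc_eq_Ioc h0k hkk,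
      setIntegral_union hdisj measurableSet_Ioc (integrableOn_f h0 h1 _ hsub1)
        (integrableOn_f h0 h1 _ hsub2),
      ih (by omega), atom_integral hx h0 h1 hk]
    norm_num

variable (n x) in
/-- The σ-field generated by the intervals `[0, x i]`. -/
def mG : MeasurableSpace ℝ :=
  MeasurableSpace.generateFrom {s | ∃ i, s = Set.Icc (0:ℝ) (x i)}

end HausdorffAux

open HausdorffAux

/-- Hausdorff convergence of empirical σ-fields fails. -/
theorem hausdorff_distance_lower_bound
    (n : ℕ) (x : Fin n → ℝ) (hx : StrictMono x)
    (h0 : ∀ i, 0 < x i) (h1 : ∀ i, x i < 1) :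
    (∃ f : ℝ → ℝ, Measurable f ∧ (∀ t, |f t| ≤ 1) ∧
      (volume.restrict (Set.Icc (0:ℝ) 1))[f |
          MeasurableSpace.generateFrom {s | ∃ i, s = Set.Icc (0:ℝ) (x i)}]
        =ᵐ[volume.restrict (Set.Icc (0:ℝ) 1)] 0 ∧
      ∫ t, |((volume.restrict (Set.Icc (0:ℝ) 1))[f |
          MeasurableSpace.generateFrom {s | ∃ i, s = Set.Icc (0:ℝ) (x i)}]) t - f t|
        ∂(volume.restrict (Set.Icc (0:ℝ) 1)) = 1) ∧
    1 ≤ ⨆ f : {f : ℝ → ℝ // Measurable f ∧ ∀ t, |f t| ≤ 1},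
      ∫ t, |((volume.restrict (Set.Icc (0:ℝ) 1))[f.1 |
          MeasurableSpace.generateFrom {s | ∃ i, s = Set.Icc (0:ℝ) (x i)}]) t - f.1 t|
        ∂(volume.restrict (Set.Icc (0:ℝ) 1)) := by
  set μ := volume.restrict (Set.Icc (0:ℝ) 1) with hμ
  have hm : mG n x ≤ (inferInstance : MeasurableSpace ℝ) := by
    apply MeasurableSpace.generateFrom_le
    rintro s ⟨i, rfl⟩
    exact measurableSet_Icc
  haveI : IsProbabilityMeasure μ := by
    constructor
    rw [hμ, Measure.restrict_apply_univ, Real.volume_Icc]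
    norm_num
  have hFmeas : Measurable (f n x) := measurable_f
  have hFabs : ∀ t, |f n x t| ≤ 1 := fun t => (abs_f t).le
  have hFint : Integrable (f n x) μ := by
    refine Integrable.mono' (integrable_const 1) hFmeas.aestronglyMeasurable ?_
    filter_upwards with t
    rw [Real.norm_eq_abs]
    exact hFabs t
  have hbasic : ∀ i : Fin n, ∫ t in Set.Icc (0:ℝ) (x i), f n x t ∂μ = 0 := by
    intro i
    rw [hμ, Measure.restrict_restrict measurableSet_Icc]
    have hin : Set.Icc (0:ℝ) (x i) ∩ Set.Icc 0 1 = Set.Icc (0:ℝ) (x i) :=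
      Set.inter_eq_left.mpr (Set.Icc_subset_Icc le_rfl (h1 i).le)
    rw [hin, integral_Icc_eq_integral_Ioc]
    have hxy : y n x (i.val + 1) = x i := by simp [y_succ n x i.isLt]
    have h00 : (0:ℝ) = y n x 0 := (y_zero n x).symm
    rw [← hxy, h00]
    exact prefix_integral hx h0 h1 (by omega)
  have htotal : ∫ t, f n x t ∂μ = 0 := by
    have heq : ∫ t, f n x t ∂μ = ∫ t in Set.Icc (0:ℝ) 1, f n x t ∂volume := rfl
    rw [heq, integral_Icc_eq_integral_Ioc]
    have h00 : (0:ℝ) = y n x 0 := (y_zero n x).symm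
    have h11 : (1:ℝ) = y n x (n + 1) := (y_large n x le_rfl).symm
    rw [h00, h11]
    exact prefix_integral hx h0 h1 le_rfl
  have hpi : IsPiSystem {s : Set ℝ | ∃ i, s = Set.Icc (0:ℝ) (x i)} := by
    rintro s ⟨i, rfl⟩ t ⟨j, rfl⟩ -
    rcases le_total (x i) (x j) with h | h
    · exact ⟨i, by rw [Set.Icc_inter_Icc]; simp [min_eq_left h]⟩
    · exact ⟨j, by rw [Set.Icc_inter_Icc]; simp [min_eq_right h]⟩
  have hset : ∀ s : Set ℝ, MeasurableSet[mG n x] s → ∫ t in s, f n x t ∂μ = 0 := by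
    intro s hs
    refine MeasurableSpace.induction_on_inter (m := mG n x)
      (C := fun u _ => ∫ t in u, f n x t ∂μ = 0) rfl hpi ?_ ?_ ?_ ?_ _ hs
    · simp
    · rintro u ⟨i, rfl⟩
      exact hbasic i
    · intro u hu hC
      have hadd := integral_add_compl (hm _ hu) hFint
      rw [hC, htotal] at hadd
      linarith
    · intro g hdisj hmeas hC
      rw [integral_iUnion (fun i => hm _ (hmeas i)) hdisj hFint.integrableOn]
      simp [hC]
  have hcond : μ[f n x|mG n x] =ᵐ[μ] 0 := by
    refine (ae_eq_condExp_of_forall_setIntegral_eq hm hFint ?_ ?_ ?_).symm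
    · intro s _ _
      exact integrableOn_zero
    · intro s hs _
      rw [hset s hs]
      simp
    · exact StronglyMeasurable.aestronglyMeasurable
        (stronglyMeasurable_const : StronglyMeasurable[mG n x] (fun _ => (0:ℝ)))
  have hL1 : ∫ t, |(μ[f n x|mG n x]) t - f n x t| ∂μ = 1 := by
    have hae : (fun t => |(μ[f n x|mG n x]) t - f n x t|) =ᵐ[μ] fun _ => (1:ℝ) := by
      filter_upwards [hcond] with t ht
      rw [ht]
      simp [abs_f]
    rw [integral_congr_ae hae, integral_const, probReal_univ]
    simp
  refine ⟨⟨f n x, hFmeas, hFabs, hcond, hL1⟩, ?_⟩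
  have hbdd : BddAbove (Set.range fun g : {g : ℝ → ℝ // Measurable g ∧ ∀ t, |g t| ≤ 1} =>
      ∫ t, |(μ[g.1|mG n x]) t - g.1 t| ∂μ) := by
    refine ⟨2, ?_⟩
    rintro v ⟨g, rfl⟩
    have hgint : Integrable g.1 μ := by
      refine Integrable.mono' (integrable_const 1) g.2.1.aestronglyMeasurable ?_
      filter_upwards with t
      rw [Real.norm_eq_abs]
      exact g.2.2 t
    have hmono : ∫ t, |(μ[g.1|mG n x]) t - g.1 t| ∂μ
        ≤ ∫ t, (|(μ[g.1|mG n x]) t| + |g.1 t|) ∂μ := by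
      refine integral_mono ((integrable_condExp.sub hgint).abs)
        (integrable_condExp.abs.add hgint.abs) ?_
      intro t
      exact abs_sub _ _
    rw [integral_add integrable_condExp.abs hgint.abs] at hmono
    have h2' : ∫ t, |(μ[g.1|mG n x]) t| ∂μ ≤ ∫ t, |g.1 t| ∂μ := integral_abs_condExp_le _
    have h3' : ∫ t, |g.1 t| ∂μ ≤ 1 := by
      calc ∫ t, |g.1 t| ∂μ ≤ ∫ _, (1:ℝ) ∂μ :=
            integral_mono hgint.abs (integrable_const 1) (fun t => g.2.2 t)
        _ = 1 := by rw [integral_const, probReal_univ]; simp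
    linarith
  calc (1:ℝ) = ∫ t, |(μ[f n x|mG n x]) t - f n x t| ∂μ := hL1.symm
    _ ≤ _ := le_ciSup hbdd ⟨f n x, hFmeas, hFabs⟩
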